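/- With notation as above (π faithful, π̃(c) = diag(π(α^n(c))), S = 1 ⊗ s), the induced representation S × π̃ of the ℓ¹-convolution algebra is faithful: if F = Σ_{n≥0} δ_n ⊗ c_n (ℓ¹-convergent sum, c_n ∈ A) and Σ_n S^n π̃(c_n) = 0 in B(H₀ ⊗ ℓ²(ℕ)), then c_n = 0 for all n. -/

import Mathlib

open scoped ENNReal

section aux

variable {H₀ : Type*} [NormedAddCommGroup H₀] [InnerProductSpace ℂ H₀] [CompleteSpace H₀]

/-- Coordinate evaluation on `ℓ²(ℕ, H₀)` as a continuous linear map. -/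
noncomputable def evalCLM (n : ℕ) : lp (fun _ : ℕ => H₀) 2 →L[ℂ] H₀ :=
  LinearMap.mkContinuous
    { toFun := fun f => f n
      map_add' := fun f g => by simp [lp.coeFn_add]
      map_smul' := fun r f => by simp [lp.coeFn_smul] }
    1 (fun f => by rw [one_mul]; exact lp.norm_apply_le_norm two_ne_zero f n)

lemma evalCLM_apply (n : ℕ) (f : lp (fun _ : ℕ => H₀) 2) : evalCLM n f = f n := rfl

lemma lp_norm_sq (f : lp (fun _ : ℕ => H₀) 2) :
    ‖f‖ ^ (2 : ℝ) = ∑' n, ‖f n‖ ^ (2 : ℝ) := by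
  simpa using lp.norm_rpow_eq_tsum (p := 2) (by norm_num) f

lemma lp_summable_sq (f : lp (fun _ : ℕ => H₀) 2) :
    Summable fun n => ‖f n‖ ^ (2 : ℝ) := by
  simpa using (lp.memℓp f).summable (p := 2) (by norm_num)

lemma rpow_two_le_of_le {x y : ℝ} (hx : 0 ≤ x) (hy : 0 ≤ y)
    (h : x ^ (2 : ℝ) ≤ y ^ (2 : ℝ)) : x ≤ y := by
  have h2 : x ^ ((2 : ℝ) * 2⁻¹) ≤ y ^ ((2 : ℝ) * 2⁻¹) := by
    rw [Real.rpow_mul hx, Real.rpow_mul hy]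
    exact Real.rpow_le_rpow (Real.rpow_nonneg hx _) h (by norm_num)
  simpa using h2

lemma rpow_two_eq_iff {x y : ℝ} (hx : 0 ≤ x) (hy : 0 ≤ y)
    (h : x ^ (2 : ℝ) = y ^ (2 : ℝ)) : x = y :=
  le_antisymm (rpow_two_le_of_le hx hy h.le) (rpow_two_le_of_le hy hx h.ge)

end aux

theorem shift_diag_representation_faithful
    {A : Type*} [NormedRing A] [StarRing A] [CStarRing A] [CompleteSpace A]
    [NormedAlgebra ℂ A] [StarModule ℂ A]
    {H₀ : Type*} [NormedAddCommGroup H₀] [InnerProductSpace ℂ H₀] [CompleteSpace H₀]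
    (π : A →⋆ₐ[ℂ] (H₀ →L[ℂ] H₀)) (hπ : Function.Injective π)
    (α : A →⋆ₐ[ℂ] A)
    (S : lp (fun _ : ℕ => H₀) 2 →L[ℂ] lp (fun _ : ℕ => H₀) 2)
    (T : A → (lp (fun _ : ℕ => H₀) 2 →L[ℂ] lp (fun _ : ℕ => H₀) 2))
    (hS0 : ∀ f : lp (fun _ : ℕ => H₀) 2, (S f) 0 = 0)
    (hS : ∀ (f : lp (fun _ : ℕ => H₀) 2) (n : ℕ), (S f) (n + 1) = f n)
    (hT : ∀ (c : A) (f : lp (fun _ : ℕ => H₀) 2) (n : ℕ),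
      (T c f) n = π ((⇑α)^[n] c) (f n))
    (c : ℕ → A) (hc : Summable fun n => ‖c n‖)
    (hzero : ∑' n : ℕ, S ^ n * T (c n) = 0) :
    ∀ n, c n = 0 := by
  letI : CStarAlgebra A := {}
  set E := lp (fun _ : ℕ => H₀) 2 with hE
  -- S is norm-nonincreasing
  have hSnorm : ‖S‖ ≤ 1 := by
    refine S.opNorm_le_bound zero_le_one fun f => ?_
    rw [one_mul]
    have hsq : ‖S f‖ ^ (2 : ℝ) = ‖f‖ ^ (2 : ℝ) := by
      rw [lp_norm_sq (S f), lp_norm_sq f]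
      have hsum : Summable fun n => ‖(S f) n‖ ^ (2 : ℝ) := lp_summable_sq (S f)
      rw [hsum.tsum_eq_zero_add]
      simp [hS0 f, hS f, Real.zero_rpow (by norm_num : (2:ℝ) ≠ 0)]
    exact (rpow_two_eq_iff (norm_nonneg _) (norm_nonneg _) hsq).le
  -- T c is bounded by ‖c‖
  have hTnorm : ∀ a : A, ‖T a‖ ≤ ‖a‖ := by
    intro a
    refine (T a).opNorm_le_bound (norm_nonneg a) fun f => ?_
    have hterm : ∀ n, ‖(T a f) n‖ ^ (2:ℝ) ≤ ‖a‖ ^ (2:ℝ) * ‖f n‖ ^ (2:ℝ) := by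
      intro n
      rw [← Real.mul_rpow (norm_nonneg _) (norm_nonneg _)]
      refine Real.rpow_le_rpow (norm_nonneg _) ?_ (by norm_num)
      rw [hT a f n]
      calc ‖π ((⇑α)^[n] a) (f n)‖ ≤ ‖π ((⇑α)^[n] a)‖ * ‖f n‖ :=
            (π ((⇑α)^[n] a)).le_opNorm (f n)
        _ ≤ ‖(⇑α)^[n] a‖ * ‖f n‖ := by
            gcongr; exact NonUnitalStarAlgHom.norm_apply_le π _
        _ ≤ ‖a‖ * ‖f n‖ := by
            refine mul_le_mul_of_nonneg_right ?_ (norm_nonneg _)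
            induction n with
            | zero => simp
            | succ k ih =>
              rw [Function.iterate_succ_apply']
              exact (NonUnitalStarAlgHom.norm_apply_le α _).trans ih
    have hsq : ‖T a f‖ ^ (2:ℝ) ≤ (‖a‖ * ‖f‖) ^ (2:ℝ) := by
      rw [lp_norm_sq (T a f), Real.mul_rpow (norm_nonneg _) (norm_nonneg _),
        lp_norm_sq f, ← tsum_mul_left]
      exact Summable.tsum_le_tsum hterm (lp_summable_sq (T a f))
        ((lp_summable_sq f).mul_left _)
    exact rpow_two_le_of_le (norm_nonneg _)
      (mul_nonneg (norm_nonneg _) (norm_nonneg _)) hsq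
  -- the operator series is summable
  have hsummable : Summable fun n : ℕ => S ^ n * T (c n) := by
    refine Summable.of_norm_bounded hc fun n => ?_
    have hSn : ‖S ^ n‖ ≤ 1 := by
      induction n with
      | zero =>
        rw [pow_zero, ContinuousLinearMap.one_def]
        exact ContinuousLinearMap.norm_id_le
      | succ k ih =>
        calc ‖S ^ (k + 1)‖ = ‖S ^ k * S‖ := by rw [pow_succ]
          _ ≤ ‖S ^ k‖ * ‖S‖ := norm_mul_le _ _
          _ ≤ 1 * 1 := mul_le_mul ih hSnorm (norm_nonneg _) zero_le_one
          _ = 1 := one_mul _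
    calc ‖S ^ n * T (c n)‖ ≤ ‖S ^ n‖ * ‖T (c n)‖ := norm_mul_le _ _
      _ ≤ 1 * ‖c n‖ := mul_le_mul hSn (hTnorm _) (norm_nonneg _) zero_le_one
      _ = ‖c n‖ := one_mul _
  -- powers of S shift coordinates
  have hpow : ∀ (m : ℕ) (g : E) (n : ℕ),
      ((S ^ m) g) n = if h : m ≤ n then g (n - m) else 0 := by
    intro m
    induction m with
    | zero => intro g n; simp
    | succ k ih =>
      intro g n
      have : (S ^ (k + 1)) g = (S ^ k) (S g) := by
        rw [pow_succ, ContinuousLinearMap.mul_apply]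
      rw [this, ih (S g) n]
      by_cases h : k + 1 ≤ n
      · rw [dif_pos (Nat.le_of_succ_le h), dif_pos h]
        have hnk : n - k = (n - (k + 1)) + 1 := by omega
        rw [hnk, hS]
      · by_cases h' : k ≤ n
        · have hnk : n = k := by omega
          rw [dif_pos h', dif_neg h, hnk, Nat.sub_self, hS0]
        · rw [dif_neg h', dif_neg h]
  intro n
  -- evaluate the sum at lp.single 2 0 v, coordinate n
  have key : ∀ v : H₀, π (c n) v = 0 := by
    intro v
    set f : E := lp.single 2 0 v with hf
    have hfcoord : ∀ k, f k = if k = 0 then v else 0 := by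
      intro k
      rw [hf, lp.single_apply]
      by_cases hk : k = 0
      · subst hk; simp
      · simp [hk]
    have hterm : ∀ m : ℕ, ((S ^ m * T (c m)) f) n
        = if m = n then π (c n) v else 0 := by
      intro m
      rw [ContinuousLinearMap.mul_apply, hpow m (T (c m) f) n]
      by_cases h : m ≤ n
      · rw [dif_pos h, hT (c m) f (n - m), hfcoord (n - m)]
        by_cases hmn : m = n
        · subst hmn
          simp
        · have : n - m ≠ 0 := by omega
          simp [this, hmn]
      · rw [dif_neg h, if_neg (by omega)]
    -- push the tsum through evaluation
    have h1 : HasSum (fun m : ℕ => S ^ m * T (c m)) 0 := by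
      rw [← hzero]; exact hsummable.hasSum
    have h2 : HasSum (fun m : ℕ => ((S ^ m * T (c m)) f)) 0 := by
      have := h1.mapL (ContinuousLinearMap.apply ℂ E f)
      simpa using this
    have h3 : HasSum (fun m : ℕ => ((S ^ m * T (c m)) f) n) 0 := by
      have := h2.mapL (evalCLM n)
      simpa [evalCLM_apply] using this
    have h4 : HasSum (fun m : ℕ => if m = n then π (c n) v else 0) (π (c n) v) := by
      have := hasSum_ite_eq n (π (c n) v)
      simpa using this
    have h5 : HasSum (fun m : ℕ => ((S ^ m * T (c m)) f) n) (π (c n) v) := by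
      refine h4.congr_fun fun m => ?_
      rw [hterm m]
    exact (h3.unique h5).symm
  have : π (c n) = 0 := ContinuousLinearMap.ext fun v => by simpa using key v
  exact hπ (by simpa using this)
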